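/- Let G be a finite group, A a normal subgroup with G/A a π-group, and H a π-Hall subgroup of A. If the conjugation action of G leaves the A-conjugacy class {H^a : a ∈ A} invariant, then there exists a π-Hall subgroup H̄ of G with H̄ ∩ A = H. -/

import Mathlib

def conjS {G : Type*} [Group G] (g : G) (H : Subgroup G) : Subgroup G :=
  H.map (MulAut.conj g⁻¹).toMonoidHom

def IsHall {G : Type*} [Group G] (π : Set ℕ) (H : Subgroup G) : Prop :=
  (∀ p : ℕ, p.Prime → p ∣ Nat.card H → p ∈ π) ∧
  (∀ p : ℕ, p.Prime → p ∣ H.index → p ∉ π)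

lemma mem_conjS {G : Type*} [Group G] (g x : G) (H : Subgroup G) :
    x ∈ conjS g H ↔ g * x * g⁻¹ ∈ H := by
  constructor
  · rintro ⟨h, hh, rfl⟩
    simpa [mul_assoc] using hh
  · intro hx
    exact ⟨g * x * g⁻¹, hx, by simp [mul_assoc]⟩

lemma coprime_of_pi {π : Set ℕ} {a b : ℕ} (ha : a ≠ 0)
    (h1 : ∀ p, p.Prime → p ∣ a → p ∉ π) (h2 : ∀ p, p.Prime → p ∣ b → p ∈ π) :
    Nat.Coprime a b := by
  rw [Nat.coprime_iff_gcd_eq_one]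
  by_contra h
  have hp : (Nat.gcd a b).minFac.Prime := Nat.minFac_prime h
  have hda : (Nat.gcd a b).minFac ∣ a := (Nat.minFac_dvd _).trans (Nat.gcd_dvd_left a b)
  have hdb : (Nat.gcd a b).minFac ∣ b := (Nat.minFac_dvd _).trans (Nat.gcd_dvd_right a b)
  exact h1 _ hp hda (h2 _ hp hdb)

lemma card_map_mul_card_ker {G G' : Type*} [Group G] [Group G'] (f : G →* G')
    (K : Subgroup G) :
    Nat.card (K.map f) * Nat.card (f.ker.subgroupOf K) = Nat.card K := by
  have h1 : Nat.card (f.ker.subgroupOf K) * (f.ker.subgroupOf K).index = Nat.card K :=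
    Subgroup.card_mul_index _
  have hker : f.ker.subgroupOf K = (f.comp K.subtype).ker := by
    ext x
    simp [Subgroup.mem_subgroupOf, MonoidHom.mem_ker]
  have h2 : (f.ker.subgroupOf K).index = Nat.card (K.map f) := by
    rw [Subgroup.index_eq_card, hker,
      Nat.card_congr (QuotientGroup.quotientKerEquivRange (f.comp K.subtype)).toEquiv]
    have hr : (f.comp K.subtype).range = K.map f := by
      rw [MonoidHom.range_comp, Subgroup.range_subtype]
    rw [hr]
  rw [← h2, mul_comm, h1]

/-- Let `A ⊴ G` with `G/A` a π-group and `H ≤ A` a π-Hall subgroup of `A`.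
If conjugation by `G` leaves the `A`-class `{H^a : a ∈ A}` invariant, then
there is a π-Hall subgroup `H̄` of `G` with `H̄ ∩ A = H`. -/
theorem stmt18 {G : Type*} [Group G] [Finite G] (π : Set ℕ)
    (A H : Subgroup G) (hA : A.Normal) (hHA : H ≤ A)
    (hpi : ∀ p : ℕ, p.Prime → p ∣ A.index → p ∈ π)
    (hHall : IsHall π (H.subgroupOf A))
    (hinv : ∀ g : G, ∃ a ∈ A, conjS g H = conjS a H) :
    ∃ Hbar : Subgroup G, IsHall π Hbar ∧ Hbar ⊓ A = H := by
  classical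
  set N := Subgroup.normalizer (H : Set G) with hNdef
  have hHN : H ≤ N := Subgroup.le_normalizer
  -- Step 1 : G = N ⊔ A
  have hsup : N ⊔ A = ⊤ := by
    rw [eq_top_iff]
    intro g _
    obtain ⟨a, haA, hg⟩ := hinv g
    have key : ∀ x, g * x * g⁻¹ ∈ H ↔ a * x * a⁻¹ ∈ H := fun x => by
      rw [← mem_conjS, ← mem_conjS, hg]
    have hn : g * a⁻¹ ∈ N := by
      rw [hNdef, Subgroup.mem_normalizer_iff]
      intro h
      rw [show g * a⁻¹ * h * (g * a⁻¹)⁻¹ = g * (a⁻¹ * h * a) * g⁻¹ by group, key,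
        show a * (a⁻¹ * h * a) * a⁻¹ = h by group]
    have hgeq : g = g * a⁻¹ * a := by group
    rw [hgeq]
    exact Subgroup.mul_mem _ (Subgroup.mem_sup_left hn) (Subgroup.mem_sup_right haA)
  -- notation inside N
  set H' : Subgroup N := H.subgroupOf N with hH'def
  set M : Subgroup N := A.subgroupOf N with hMdef
  haveI hH'norm : H'.Normal := Subgroup.normal_in_normalizer
  haveI hMnorm : M.Normal := hA.subgroupOf N
  have hH'M : H' ≤ M := fun x hx => hHA hx
  have hHAN : H ≤ A ⊓ N := le_inf hHA hHN
  -- nonzero cardinalities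
  have hcardH : Nat.card H ≠ 0 := Nat.card_pos.ne'
  have hAind : A.index ≠ 0 := Subgroup.index_ne_zero_of_finite
  -- quotient of N by H'
  set φ : N →* N ⧸ H' := QuotientGroup.mk' H' with hφdef
  have hφsurj : Function.Surjective φ := QuotientGroup.mk'_surjective H'
  set M' : Subgroup (N ⧸ H') := M.map φ with hM'def
  haveI hM'norm : M'.Normal := hMnorm.map φ hφsurj
  have hφker : φ.ker = H' := QuotientGroup.ker_mk' H'
  -- cardinalities of subgroupOf copies
  have hcardH' : Nat.card H' = Nat.card H :=
    Nat.card_congr (Subgroup.subgroupOfEquivOfLe hHN).toEquiv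
  have hcardM : Nat.card M = Nat.card (A ⊓ N : Subgroup G) := by
    rw [hMdef, ← Subgroup.inf_subgroupOf_right A N]
    exact Nat.card_congr (Subgroup.subgroupOfEquivOfLe inf_le_right).toEquiv
  -- card M' = H.relIndex (A ⊓ N)
  have hAN1 : Nat.card (H.subgroupOf (A ⊓ N)) * (H.subgroupOf (A ⊓ N)).index
      = Nat.card (A ⊓ N : Subgroup G) := Subgroup.card_mul_index _
  have hcardHAN : Nat.card (H.subgroupOf (A ⊓ N)) = Nat.card H :=
    Nat.card_congr (Subgroup.subgroupOfEquivOfLe hHAN).toEquiv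
  have hMmul : Nat.card M' * Nat.card (φ.ker.subgroupOf M) = Nat.card M :=
    card_map_mul_card_ker φ M
  have hcardkerM : Nat.card (φ.ker.subgroupOf M) = Nat.card H := by
    rw [hφker, Nat.card_congr (Subgroup.subgroupOfEquivOfLe hH'M).toEquiv]
    exact hcardH'
  have hANmul : Nat.card M' * Nat.card H = Nat.card (A ⊓ N : Subgroup G) := by
    rw [← hcardkerM, hMmul, hcardM]
  have hAN2 : H.relIndex (A ⊓ N) * Nat.card H = Nat.card (A ⊓ N : Subgroup G) := by
    rw [mul_comm, ← hcardHAN]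
    exact hAN1
  have hcardM' : Nat.card M' = H.relIndex (A ⊓ N) :=
    Nat.eq_of_mul_eq_mul_right (Nat.pos_of_ne_zero hcardH) (hANmul.trans hAN2.symm)
  have hrelANdvd : H.relIndex (A ⊓ N) ∣ H.relIndex A :=
    ⟨(A ⊓ N).relIndex A, (Subgroup.relIndex_mul_relIndex H (A ⊓ N) A hHAN inf_le_left).symm⟩
  -- index of M'
  have hMindex : M.index = A.index := by
    have h0 : M.index = A.relIndex N := rfl
    rw [h0, ← Subgroup.relIndex_sup_right, hsup, Subgroup.relIndex_top_right]
  have hM'index : M'.index = A.index := by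
    have hkM : φ.ker ≤ M := by rw [hφker]; exact hH'M
    show (M.map φ).index = A.index
    rw [M.index_map_eq hφsurj hkM, hMindex]
  -- primes of relIndex / card
  have hrelA : H.relIndex A = (H.subgroupOf A).index := rfl
  have hpi' : ∀ p : ℕ, p.Prime → p ∣ H.relIndex A → p ∉ π := by
    intro p hp hd
    exact hHall.2 p hp (hrelA ▸ hd)
  -- coprimality and Schur–Zassenhaus
  have hcop : Nat.Coprime (Nat.card M') M'.index := by
    apply coprime_of_pi
    · exact Nat.card_pos.ne'
    · intro p hp hd
      exact hpi' p hp (hcardM' ▸ hd |>.trans hrelANdvd)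
    · intro p hp hd
      exact hpi p hp (hM'index ▸ hd)
  obtain ⟨C, hC⟩ := Subgroup.exists_right_complement'_of_coprime hcop
  -- the candidate subgroup
  set Hbar₀ : Subgroup N := C.comap φ with hHbar₀def
  set Hbar : Subgroup G := Hbar₀.map N.subtype with hHbardef
  have hH'Hbar₀ : H' ≤ Hbar₀ := hφker ▸ Subgroup.ker_le_comap φ C
  have hHHbar : H ≤ Hbar := by
    have : (H.subgroupOf N).map N.subtype ≤ Hbar :=
      Subgroup.map_mono hH'Hbar₀
    rwa [Subgroup.subgroupOf_map_subtype, inf_eq_left.mpr hHN] at this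
  -- intersection
  have hint : Hbar ⊓ A = H := by
    apply le_antisymm
    · rintro x ⟨hx, hxA⟩
      obtain ⟨y, hy, rfl⟩ := hx
      have hyM : y ∈ M := hxA
      have hmem : φ y ∈ M' ⊓ C := ⟨Subgroup.mem_map_of_mem φ hyM, hy⟩
      have h1 : φ y = 1 := by
        have := hC.disjoint
        rw [disjoint_iff] at this
        rw [this] at hmem
        exact hmem
      have : y ∈ H' := by
        rw [← hφker]
        exact h1
      exact this
    · exact le_inf hHHbar hHA
  -- cardinality of Hbar
  have hcardHbar0 : Nat.card Hbar = Nat.card Hbar₀ :=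
    (Nat.card_congr (Subgroup.equivMapOfInjective Hbar₀ N.subtype N.subtype_injective).toEquiv).symm
  have hmapHbar₀ : Hbar₀.map φ = C := Subgroup.map_comap_eq_self_of_surjective hφsurj C
  have hcardkerHbar₀ : Nat.card (φ.ker.subgroupOf Hbar₀) = Nat.card H := by
    rw [hφker, Nat.card_congr (Subgroup.subgroupOfEquivOfLe hH'Hbar₀).toEquiv]
    exact hcardH'
  have hHbar₀mul : Nat.card C * Nat.card H = Nat.card Hbar₀ := by
    have := card_map_mul_card_ker φ Hbar₀
    rwa [hmapHbar₀, hcardkerHbar₀] at this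
  -- card C = M'.index
  have hQ1 : Nat.card M' * Nat.card C = Nat.card (N ⧸ H') := hC.card_mul
  have hQ2 : Nat.card M' * M'.index = Nat.card (N ⧸ H') := Subgroup.card_mul_index M'
  have hcardM'pos : 0 < Nat.card M' := Nat.card_pos
  have hcardC : Nat.card C = M'.index :=
    Nat.eq_of_mul_eq_mul_left hcardM'pos (hQ1.trans hQ2.symm)
  have hcardHbar : Nat.card Hbar = A.index * Nat.card H := by
    rw [hcardHbar0, ← hHbar₀mul, hcardC, hM'index]
  -- index of Hbar
  have hGA : Nat.card A * A.index = Nat.card G := Subgroup.card_mul_index A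
  have hArel : Nat.card H * H.relIndex A = Nat.card A := by
    have h1 : Nat.card (H.subgroupOf A) * (H.subgroupOf A).index = Nat.card A :=
      Subgroup.card_mul_index _
    rwa [Nat.card_congr (Subgroup.subgroupOfEquivOfLe hHA).toEquiv] at h1
  have hHbarmul : Hbar.index * Nat.card Hbar = Nat.card G := Subgroup.index_mul_card Hbar
  have hindHbar : Hbar.index = H.relIndex A := by
    have heq : Hbar.index * (A.index * Nat.card H) = H.relIndex A * (A.index * Nat.card H) := by
      calc Hbar.index * (A.index * Nat.card H) = Hbar.index * Nat.card Hbar := by rw [hcardHbar]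
        _ = Nat.card G := hHbarmul
        _ = Nat.card A * A.index := hGA.symm
        _ = Nat.card H * H.relIndex A * A.index := by rw [hArel]
        _ = H.relIndex A * (A.index * Nat.card H) := by ring
    have hne : A.index * Nat.card H ≠ 0 := mul_ne_zero hAind hcardH
    exact Nat.eq_of_mul_eq_mul_right (Nat.pos_of_ne_zero hne) heq
  -- conclusion
  refine ⟨Hbar, ⟨?_, ?_⟩, hint⟩
  · intro p hp hd
    rw [hcardHbar] at hd
    rcases (Nat.Prime.dvd_mul hp).mp hd with h | h
    · exact hpi p hp h
    · refine hHall.1 p hp ?_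
      rwa [Nat.card_congr (Subgroup.subgroupOfEquivOfLe hHA).toEquiv]
  · intro p hp hd
    rw [hindHbar] at hd
    exact hpi' p hp hd
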